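/- arXiv:1008.2723 — 9 statements merged into one kernel-verified Lean document; each statement's English description precedes it below -/
import Mathlib

section
/- In an associative dialgebra, the quasi-Jordan product a◁b = a⊣b + b⊢a satisfies right commutativity: a◁(b◁c) = a◁(c◁b). -/
/-- An associative dialgebra: two bilinear operations `l` (⊣) and `r` (⊢)
satisfying the five dialgebra axioms. -/
structure Dialgebra (D : Type*) [AddCommGroup D] where
  l : D → D → D
  r : D → D → D
  l_add_left : ∀ a b c : D, l (a + b) c = l a c + l b c
  l_add_right : ∀ a b c : D, l a (b + c) = l a b + l a c
  r_add_left : ∀ a b c : D, r (a + b) c = r a c + r b c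
  r_add_right : ∀ a b c : D, r a (b + c) = r a b + r a c
  ax1 : ∀ a b c : D, r (r a b) c = r (l a b) c
  ax2 : ∀ a b c : D, l a (l b c) = l a (r b c)
  ax3 : ∀ a b c : D, l (l a b) c = l a (l b c)
  ax4 : ∀ a b c : D, r (r a b) c = r a (r b c)
  ax5 : ∀ a b c : D, l (r a b) c = r a (l b c)

/-- The quasi-Jordan product  a ◁ b = a ⊣ b + b ⊢ a. -/
def Dialgebra.qj {D : Type*} [AddCommGroup D] (A : Dialgebra D) (a b : D) : D :=
  A.l a b + A.r b a

/-- Right commutativity of the quasi-Jordan product. -/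
theorem quasiJordan_right_commutative {D : Type*} [AddCommGroup D] (A : Dialgebra D)
    (a b c : D) : A.qj a (A.qj b c) = A.qj a (A.qj c b) := by
  simp only [Dialgebra.qj, A.l_add_right, A.r_add_left]
  rw [A.ax2 a b c, A.ax2 a c b, ← A.ax1 b c a, ← A.ax1 c b a]
  abel
end

section
/- In an associative dialgebra, the quasi-Jordan product a◁b = a⊣b + b⊢a satisfies the multilinear quasi-Jordan identity: (a◁(b◁c))◁d + (a◁(b◁d))◁c + (a◁(c◁d))◁b = (a◁b)◁(c◁d) + (a◁c)◁(b◁d) + (a◁d)◁(b◁c). -/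
theorem Dialgebra.ax1' {D : Type*} [AddCommGroup D] (A : Dialgebra D) (a b c : D) :
    A.r (A.l a b) c = A.r a (A.r b c) := by rw [← A.ax1, A.ax4]

theorem Dialgebra.ax2' {D : Type*} [AddCommGroup D] (A : Dialgebra D) (a b c d : D) :
    A.l a (A.r b (A.l c d)) = A.l a (A.r b (A.r c d)) := by
  rw [← A.ax2 a b (A.l c d), ← A.ax3 b c d, A.ax2 a (A.l b c) d, A.ax1']

/-- The multilinear quasi-Jordan identity holds for the quasi-Jordan product. -/
theorem quasiJordan_multilinear_identity {D : Type*} [AddCommGroup D] (A : Dialgebra D)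
    (a b c d : D) :
    A.qj (A.qj a (A.qj b c)) d + A.qj (A.qj a (A.qj b d)) c + A.qj (A.qj a (A.qj c d)) b =
      A.qj (A.qj a b) (A.qj c d) + A.qj (A.qj a c) (A.qj b d) + A.qj (A.qj a d) (A.qj b c) := by
  simp only [Dialgebra.qj, A.l_add_left, A.l_add_right, A.r_add_left, A.r_add_right,
    A.ax3, A.ax5, A.ax2, A.ax1', A.ax4, A.ax2']
  abel
end

section
/- In an associative dialgebra, the quasi-Jordan product a◁b = a⊣b + b⊢a satisfies the multilinear associator-derivation identity: ((a◁b)◁d)◁c + ((a◁c)◁d)◁b + a◁((b◁c)◁d) = (a◁(b◁c))◁d + (a◁(b◁d))◁c + (a◁(c◁d))◁b. -/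
/-- The multilinear associator-derivation identity holds for the quasi-Jordan product. -/
theorem associatorDerivation_multilinear_identity {D : Type*} [AddCommGroup D] (A : Dialgebra D)
    (a b c d : D) :
    A.qj (A.qj (A.qj a b) d) c + A.qj (A.qj (A.qj a c) d) b + A.qj a (A.qj (A.qj b c) d) =
      A.qj (A.qj a (A.qj b c)) d + A.qj (A.qj a (A.qj b d)) c + A.qj (A.qj a (A.qj c d)) b := by
  simp only [Dialgebra.qj, A.l_add_left, A.l_add_right, A.r_add_left, A.r_add_right,
    ← A.ax3, ← A.ax2, A.ax4, ← A.ax1, A.ax5]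
  abel
end

section
/- In an associative dialgebra over a ring of characteristic not 2, the quasi-Jordan identity (b◁a)◁(a◁a) = (b◁(a◁a))◁a holds for the product a◁b = a⊣b + b⊢a. -/
/-- The quasi-Jordan identity (b◁a)◁(a◁a) = (b◁(a◁a))◁a, over a ring of characteristic ≠ 2. -/
theorem quasiJordan_identity {R D : Type*} [CommRing R] [Invertible (2 : R)]
    [AddCommGroup D] [Module R D] (A : Dialgebra D) (a b : D) :
    A.qj (A.qj b a) (A.qj a a) = A.qj (A.qj b (A.qj a a)) a := by
  have ax1' : ∀ x y z : D, A.r (A.l x y) z = A.r x (A.r y z) := fun x y z => by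
    rw [← A.ax1, A.ax4]
  have ax2' : ∀ x y z : D, A.l x (A.r y z) = A.l (A.l x y) z := fun x y z => by
    rw [← A.ax2, A.ax3]
  have ax3' : ∀ x y z : D, A.l x (A.l y z) = A.l (A.l x y) z := fun x y z =>
    (A.ax3 x y z).symm
  simp only [Dialgebra.qj, A.l_add_left, A.l_add_right, A.r_add_left, A.r_add_right,
    ax1', ax2', ax3', A.ax4, A.ax5]
  abel
end

section
/- In an associative dialgebra over a ring of characteristic not 2, the associator-derivation identity (b, a◁a, c) = 2·((b,a,c)◁a) holds for the product a◁b = a⊣b + b⊢a, where (x,y,z) = (x◁y)◁z − x◁(y◁z). -/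
def Dialgebra.assoc {D : Type*} [AddCommGroup D] (A : Dialgebra D) (x y z : D) : D :=
  A.qj (A.qj x y) z - A.qj x (A.qj y z)

/-- The associator-derivation identity (b, a◁a, c) = 2·((b,a,c)◁a),
over a ring of characteristic ≠ 2. -/
theorem associatorDerivation_identity {R D : Type*} [CommRing R] [Invertible (2 : R)]
    [AddCommGroup D] [Module R D] (A : Dialgebra D) (a b c : D) :
    A.assoc b (A.qj a a) c = (2 : ℤ) • A.qj (A.assoc b a c) a := by
  have ax1' : ∀ x y z : D, A.r (A.l x y) z = A.r x (A.r y z) := fun x y z => by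
    rw [← A.ax1, A.ax4]
  have ax2' : ∀ x y z : D, A.l x (A.r y z) = A.l x (A.l y z) := fun x y z =>
    (A.ax2 x y z).symm
  have lsl : ∀ x y z : D, A.l (x - y) z = A.l x z - A.l y z := fun x y z =>
    (AddMonoidHom.mk' (fun w => A.l w z) (fun p q => A.l_add_left p q z)).map_sub x y
  have lsr : ∀ x y z : D, A.l x (y - z) = A.l x y - A.l x z := fun x y z =>
    (AddMonoidHom.mk' (fun w => A.l x w) (fun p q => A.l_add_right x p q)).map_sub y z
  have rsl : ∀ x y z : D, A.r (x - y) z = A.r x z - A.r y z := fun x y z =>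
    (AddMonoidHom.mk' (fun w => A.r w z) (fun p q => A.r_add_left p q z)).map_sub x y
  have rsr : ∀ x y z : D, A.r x (y - z) = A.r x y - A.r x z := fun x y z =>
    (AddMonoidHom.mk' (fun w => A.r x w) (fun p q => A.r_add_right x p q)).map_sub y z
  simp only [Dialgebra.assoc, Dialgebra.qj, lsl, lsr, rsl, rsr, A.l_add_left, A.l_add_right,
    A.r_add_left, A.r_add_right, A.ax3, A.ax4, A.ax5, ax1', ax2', two_zsmul]
  abel
end

section
/- Let J(a,b,c,d) and K(a,b,c,d) be the multilinear quasi-Jordan and associator-derivation polynomials in a right-commutative algebra, and define L(a,b,c,d) = ((ac)b)d + ((ad)b)c − (ab)(cd) − (ac)(bd) − (ad)(bc) + a((cd)b) and M(a,b,c,d) = (b(cd))a + (b(ac))d + (b(ad))c − (ba)(cd) − (bd)(ac) − (bc)(ad). Then in any right-commutative algebra: J(a,b,c,d) = M(b,a,d,c), K(a,b,c,d) = L(a,d,b,c) − M(b,a,c,d), L(a,b,c,d) = J(a,b,c,d) + K(a,c,d,b), and M(a,b,c,d) = J(b,a,c,d). -/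
/-- The multilinear quasi-Jordan polynomial J. -/
def Jp {A : Type*} [NonUnitalNonAssocRing A] (a b c d : A) : A :=
  (a*(b*c))*d + (a*(b*d))*c + (a*(c*d))*b - (a*b)*(c*d) - (a*c)*(b*d) - (a*d)*(b*c)

/-- The multilinear associator-derivation polynomial K. -/
def Kp {A : Type*} [NonUnitalNonAssocRing A] (a b c d : A) : A :=
  ((a*b)*d)*c + ((a*c)*d)*b - (a*(b*c))*d - (a*(b*d))*c - (a*(c*d))*b + a*((b*c)*d)

/-- Kolesnikov's polynomial L. -/
def Lp {A : Type*} [NonUnitalNonAssocRing A] (a b c d : A) : A :=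
  ((a*c)*b)*d + ((a*d)*b)*c - (a*b)*(c*d) - (a*c)*(b*d) - (a*d)*(b*c) + a*((c*d)*b)

/-- Kolesnikov's polynomial M. -/
def Mp {A : Type*} [NonUnitalNonAssocRing A] (a b c d : A) : A :=
  (b*(c*d))*a + (b*(a*c))*d + (b*(a*d))*c - (b*a)*(c*d) - (b*d)*(a*c) - (b*c)*(a*d)

/-- Relations among J, K, L, M in any right-commutative algebra. -/
theorem JKLM_relations {A : Type*} [NonUnitalNonAssocRing A]
    (hrc : ∀ a b c : A, a*(b*c) = a*(c*b)) (a b c d : A) :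
    Jp a b c d = Mp b a d c ∧
    Kp a b c d = Lp a d b c - Mp b a c d ∧
    Lp a b c d = Jp a b c d + Kp a c d b ∧
    Mp a b c d = Jp b a c d := by
  simp only [Jp, Kp, Lp, Mp]
  refine ⟨?_, ?_, ?_, ?_⟩
  · simp only [hrc a d c, hrc (a*b) d c]; abel
  · simp only [hrc (a*b) d c, hrc (a*c) d b]; abel
  · simp only [hrc a c b, hrc a d b]; abel
  · abel
end

section
/- In a free right-commutative algebra, for any submonomial of the form x = yz within a monomial w, the factor z may be assumed commutative: any monomial obtained from w by applying commutativity within the right factor of any submonomial is equal to w modulo right-commutativity. -/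
/-- Nonassociative monomials (binary trees with leaves labeled in X). -/
inductive Mag (X : Type*) where
  | leaf : X → Mag X
  | node : Mag X → Mag X → Mag X

/-- Equivalence of monomials modulo full commutativity: congruence closure of xy ~ yx. -/
inductive CEq {X : Type*} : Mag X → Mag X → Prop where
  | refl (t : Mag X) : CEq t t
  | symm {s t : Mag X} : CEq s t → CEq t s
  | trans {s t u : Mag X} : CEq s t → CEq t u → CEq s u
  | congr {s s' t t' : Mag X} : CEq s s' → CEq t t' → CEq (.node s t) (.node s' t')
  | swap (s t : Mag X) : CEq (.node s t) (.node t s)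

/-- Equivalence modulo right-commutativity: congruence closure of u(xy) ~ u(yx). -/
inductive RCEq {X : Type*} : Mag X → Mag X → Prop where
  | refl (t : Mag X) : RCEq t t
  | symm {s t : Mag X} : RCEq s t → RCEq t s
  | trans {s t u : Mag X} : RCEq s t → RCEq t u → RCEq s u
  | congr {s s' t t' : Mag X} : RCEq s s' → RCEq t t' → RCEq (.node s t) (.node s' t')
  | swap (u x y : Mag X) : RCEq (.node u (.node x y)) (.node u (.node y x))

/-- In the free right-commutative algebra, the right factor of any submonomial may be
assumed commutative: if z ~ z' modulo full commutativity, then uz ~ uz' modulo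
right-commutativity. -/
theorem right_factor_commutative {X : Type*} (u z z' : Mag X) (h : CEq z z') :
    RCEq (.node u z) (.node u z') := by
  induction h generalizing u with
  | refl t => exact .refl _
  | symm _ ih => exact .symm (ih u)
  | trans _ _ ih1 ih2 => exact .trans (ih1 u) (ih2 u)
  | swap s t => exact .swap u s t
  | @congr s s' t t' _ _ ihs iht =>
    exact .trans (.swap u s t)
      (.trans (.congr (.refl u) (ihs t))
        (.trans (.swap u t s') (.congr (.refl u) (iht s'))))
end

section
/- In an associative dialgebra, any product of elements a_1, …, a_n with center a_k (defined recursively by c(w) = w for generators, c(w1 ⊣ w2) = c(w1), c(w1 ⊢ w2) = c(w2)) equals the normal form (a_1 ⊢ ⋯ ⊢ a_{k−1}) ⊢ a_k ⊣ (a_{k+1} ⊣ ⋯ ⊣ a_n). In particular, for n = 3: any of the dialgebra products of a_1, a_2, a_3 with center a_2 equals a_1 ⊢ (a_2 ⊣ a_3). -/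
/-- Normal form theorem in degrees 3 and 4: every dialgebra monomial with center
`a₂` (resp. `b` in degree 4) equals the Loday normal form
a₁ ⊢ (a₂ ⊣ a₃), resp. a ⊢ (b ⊣ (c ⊣ d)). -/
theorem dialgebra_normal_form_deg3_deg4 {D : Type*} [AddCommGroup D] (A : Dialgebra D)
    (a b c d : D) :
    -- degree 3, center the middle variable:
    (A.l (A.r a b) c = A.r a (A.l b c)) ∧
    -- degree 4, center the second variable: all seven monomials equal the normal form
    (A.l (A.l (A.r a b) c) d = A.r a (A.l b (A.l c d))) ∧
    (A.l (A.r a (A.l b c)) d = A.r a (A.l b (A.l c d))) ∧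
    (A.l (A.r a b) (A.l c d) = A.r a (A.l b (A.l c d))) ∧
    (A.l (A.r a b) (A.r c d) = A.r a (A.l b (A.l c d))) ∧
    (A.r a (A.l (A.l b c) d) = A.r a (A.l b (A.l c d))) ∧
    (A.r a (A.l b (A.r c d)) = A.r a (A.l b (A.l c d))) := by
  refine ⟨A.ax5 a b c, ?_, ?_, A.ax5 .., ?_, ?_, ?_⟩
  · rw [A.ax3, A.ax5]
  · rw [A.ax5, A.ax3]
  · rw [← A.ax2, A.ax5]
  · rw [A.ax3]
  · rw [← A.ax2]
end

section
/- In an associative dialgebra, the expansion of the right-commutative monomial (ab)c under the quasi-Jordan product a◁b = a⊣b + b⊢a equals the sum of four dialgebra normal-form monomials: (a⊣b)⊣c + (b⊢a)⊣c + c⊢(a⊣b) + c⊢(b⊢a), and each of these equals a normal form with center a: â b c, c â b (appropriately ordered). In particular, the expansion of (ab)c and of a(cb) into the free associative dialgebra have exactly the claimed multisets of normal-form monomials, and E((ab)c + a(bc)) − E((ac)b + a(cb)) ≠ 0 in general while E(a(bc)) = E(a(cb)). -/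
/-- Expansion of (ab)c under the quasi-Jordan product is the sum of four dialgebra
monomials; the expansion map is well defined on right-commutative monomials
(E(a(bc)) = E(a(cb)) in every associative dialgebra); and in general
E((ab)c + a(bc)) − E((ac)b + a(cb)) ≠ 0. -/
theorem expansion_map_facts :
    (∀ (D : Type*) (_ : AddCommGroup D), ∀ (A : Dialgebra D) (a b c : D),
      A.qj (A.qj a b) c =
        A.l (A.l a b) c + A.l (A.r b a) c + A.r c (A.l a b) + A.r c (A.r b a)) ∧
    (∀ (D : Type*) (_ : AddCommGroup D), ∀ (A : Dialgebra D) (a b c : D),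
      A.qj a (A.qj b c) = A.qj a (A.qj c b)) ∧
    (∃ (D : Type) (_ : AddCommGroup D) (A : Dialgebra D) (a b c : D),
      A.qj (A.qj a b) c + A.qj a (A.qj b c) ≠ A.qj (A.qj a c) b + A.qj a (A.qj c b)) := by
  refine ⟨?_, ?_, ?_⟩
  · intro D _ A a b c
    simp only [Dialgebra.qj, A.l_add_left, A.r_add_right]
    abel
  · intro D _ A a b c
    simp only [Dialgebra.qj, A.l_add_right, A.r_add_left]
    rw [A.ax2 a b c, A.ax2 a c b, A.ax1 b c a, A.ax1 c b a]
    abel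
  · refine ⟨Matrix (Fin 2) (Fin 2) ℤ, inferInstance,
      ⟨fun x y => x * y, fun x y => x * y,
        fun a b c => add_mul a b c, fun a b c => mul_add a b c,
        fun a b c => add_mul a b c, fun a b c => mul_add a b c,
        fun a b c => rfl, fun a b c => rfl,
        fun a b c => mul_assoc a b c, fun a b c => mul_assoc a b c,
        fun a b c => mul_assoc a b c⟩,
      Matrix.single 0 0 1, Matrix.single 0 1 1,
      Matrix.single 1 1 1, ?_⟩
    intro h
    have := congrFun (congrFun h 0) 1
    simp [Dialgebra.qj, Matrix.mul_apply, Matrix.single, Fin.sum_univ_two] at this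
end
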